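/- Let F be a free group and R, S normal subgroups of F. There is an isomorphism of abelian groups (R/R') ⊗_ℤ (S/S') ≅ 𝔯𝔰/𝔯𝔣𝔰 sending the elementary tensor (rR') ⊗ (sS') to the class of (r−1)(s−1) modulo 𝔯𝔣𝔰, for r ∈ R, s ∈ S. -/

import Mathlib

open MonoidAlgebra TensorProduct

/-- For a subgroup `G` of `F`, the two-sided ideal of the integral group ring `ℤ[F]`
generated by `{g - 1 : g ∈ G}`, realized as the `ℤ`-span of `{f₁ (g-1) f₂}`. -/
noncomputable def relIdeal (F : Type) [Group F] (G : Subgroup F) : Submodule ℤ (MonoidAlgebra ℤ F) :=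
  Submodule.span ℤ {x | ∃ f₁ f₂ : F, ∃ g ∈ G, x = of ℤ F f₁ * (of ℤ F g - 1) * of ℤ F f₂}


noncomputable section Aux
variable {F : Type} [Group F]

/-- augmentation map -/
def aug : MonoidAlgebra ℤ F →ₐ[ℤ] ℤ := MonoidAlgebra.lift ℤ ℤ F 1

@[simp] lemma aug_of (f : F) : (aug (of ℤ F f) : ℤ) = 1 := by simp [aug]

/-- auxiliary group for right derivations: `(m,u)(n,v) = (m·v + n, uv)` -/
@[ext] structure DA (F : Type) [Group F] where
  m : MonoidAlgebra ℤ F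
  g : F

instance : Group (DA F) where
  mul a b := ⟨a.m * of ℤ F b.g + b.m, a.g * b.g⟩
  one := ⟨0, 1⟩
  inv a := ⟨-(a.m * of ℤ F a.g⁻¹), a.g⁻¹⟩
  mul_assoc a b c := by
    ext : 1
    · show (a.m * of ℤ F b.g + b.m) * of ℤ F c.g + c.m
        = a.m * of ℤ F (b.g * c.g) + (b.m * of ℤ F c.g + c.m)
      simp [add_mul, mul_assoc, add_assoc]
    · exact mul_assoc _ _ _
  one_mul a := by
    ext : 1
    · show 0 * of ℤ F a.g + a.m = a.m; simp
    · exact one_mul _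
  mul_one a := by
    ext : 1
    · show a.m * of ℤ F 1 + 0 = a.m
      rw [map_one, mul_one, add_zero]
    · exact mul_one _
  inv_mul_cancel a := by
    ext : 1
    · show -(a.m * of ℤ F a.g⁻¹) * of ℤ F a.g + a.m = 0
      rw [neg_mul, mul_assoc, ← map_mul, inv_mul_cancel, map_one, mul_one,
        neg_add_cancel]
    · exact inv_mul_cancel _

@[simp] lemma DA.mul_m (a b : DA F) : (a * b).m = a.m * of ℤ F b.g + b.m := rfl
@[simp] lemma DA.mul_g (a b : DA F) : (a * b).g = a.g * b.g := rfl
@[simp] lemma DA.one_m : (1 : DA F).m = 0 := rfl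
@[simp] lemma DA.one_g : (1 : DA F).g = 1 := rfl

/-- second projection as hom -/
def DA.sndHom : DA F →* F where
  toFun := DA.g
  map_one' := rfl
  map_mul' _ _ := rfl
end Aux

noncomputable section Deriv
open scoped Classical
variable {F : Type} [Group F] (R : Subgroup F) [IsFreeGroup R]

/-- the crossed-homomorphism valued hom defining the Fox derivative w.r.t.
generator `x` of the free group `R`. -/
def dphi (x : IsFreeGroup.Generators R) : R →* DA F :=
  IsFreeGroup.lift (fun y => ⟨if y = x then 1 else 0, ((IsFreeGroup.of y : R) : F)⟩)

lemma dphi_g (x : IsFreeGroup.Generators R) (r : R) : (dphi R x r).g = (r : F) := by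
  have h : (DA.sndHom).comp (dphi R x) = R.subtype := by
    apply IsFreeGroup.ext_hom
    intro y
    simp [dphi, DA.sndHom, IsFreeGroup.lift_of]
  exact congrArg (fun (φ : R →* F) => φ r) h

/-- Fox derivative (as a crossed homomorphism) of elements of `R` w.r.t. generator `x`. -/
def dfox (x : IsFreeGroup.Generators R) (r : R) : MonoidAlgebra ℤ F := (dphi R x r).m

lemma dfox_mul (x : IsFreeGroup.Generators R) (u v : R) :
    dfox R x (u * v) = dfox R x u * of ℤ F (v : F) + dfox R x v := by
  have := congrArg DA.m (map_mul (dphi R x) u v)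
  simpa [dfox, dphi_g] using this

@[simp] lemma dfox_of (x y : IsFreeGroup.Generators R) :
    dfox R x (IsFreeGroup.of y) = if y = x then 1 else 0 := by
  simp [dfox, dphi, IsFreeGroup.lift_of]

@[simp] lemma dfox_one (x : IsFreeGroup.Generators R) : dfox R x 1 = 0 := by
  have := congrArg DA.m (map_one (dphi R x))
  simpa [dfox] using this
end Deriv

noncomputable section Transversal
variable {F : Type} [Group F] (R : Subgroup F) [R.Normal]

/-- transversal representative of the coset `R f` (through the quotient `F ⧸ R`). -/
def trv (f : F) : F := (QuotientGroup.mk f : F ⧸ R).out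

lemma trv_spec (f : F) : (trv R f)⁻¹ * f ∈ R := by
  have h : (QuotientGroup.mk (trv R f) : F ⧸ R) = QuotientGroup.mk f :=
    Quotient.out_eq _
  exact (QuotientGroup.eq.mp h)

/-- the `R`-part of `f` relative to the transversal: `f = rpart f * trv f`. -/
def rpart (f : F) : R :=
  ⟨f * (trv R f)⁻¹, by
    have := trv_spec R f
    have h2 := Subgroup.Normal.conj_mem ‹R.Normal› _ this f
    simpa [mul_assoc] using h2⟩

@[simp] lemma rpart_mul_trv (f : F) : (rpart R f : F) * trv R f = f := by
  simp [rpart, mul_assoc]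

lemma trv_mul {r : F} (hr : r ∈ R) (f : F) : trv R (r * f) = trv R f := by
  unfold trv
  congr 1
  rw [QuotientGroup.eq]
  have : f⁻¹ * r⁻¹ * f ∈ R := by
    simpa [mul_assoc] using Subgroup.Normal.conj_mem ‹R.Normal› _ (inv_mem hr) f⁻¹
  simpa [mul_assoc] using this

lemma rpart_mul {r : F} (hr : r ∈ R) (f : F) :
    rpart R (r * f) = ⟨r, hr⟩ * rpart R f := by
  ext
  simp [rpart, trv_mul R hr f, mul_assoc]
end Transversal

noncomputable section DxSec
variable {F : Type} [Group F] (R : Subgroup F) [R.Normal] [IsFreeGroup R]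

/-- Fox derivative extended to the whole group ring, via the transversal. -/
def Dx (x : IsFreeGroup.Generators R) :
    MonoidAlgebra ℤ F →ₗ[ℤ] MonoidAlgebra ℤ F :=
  Finsupp.linearCombination ℤ (fun f => dfox R x (rpart R f) * of ℤ F (trv R f)) ∘ₗ
    (MonoidAlgebra.coeffLinearEquiv ℤ).toLinearMap

lemma Dx_of (x : IsFreeGroup.Generators R) (f : F) :
    Dx R x (of ℤ F f) = dfox R x (rpart R f) * of ℤ F (trv R f) := by
  show (Finsupp.linearCombination ℤ
      (fun f => dfox R x (rpart R f) * of ℤ F (trv R f))) (Finsupp.single f 1) = _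
  rw [Finsupp.linearCombination_single, one_smul]

/-- key property: `Dx` is left `𝔯`-linear in the appropriate sense. -/
lemma Dx_r_mul (x : IsFreeGroup.Generators R) {r : F} (hr : r ∈ R)
    (v : MonoidAlgebra ℤ F) :
    Dx R x ((of ℤ F r - 1) * v) = dfox R x ⟨r, hr⟩ * v := by
  induction v using MonoidAlgebra.induction_linear with
  | zero => simp
  | add a b ha hb => rw [mul_add, map_add, ha, hb, mul_add]
  | single f b =>
      have hb : (MonoidAlgebra.single f b : MonoidAlgebra ℤ F) = b • of ℤ F f := by
        show _ = b • MonoidAlgebra.single f (1 : ℤ); rw [MonoidAlgebra.smul_single', mul_one]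
      rw [hb, mul_smul_comm, map_smul, mul_smul_comm]
      congr 1
      rw [sub_mul, one_mul, map_sub, ← map_mul, Dx_of, Dx_of,
        rpart_mul R hr f, trv_mul R hr f, dfox_mul]
      rw [add_mul, mul_assoc]
      have : (of ℤ F ((rpart R f : F))) * of ℤ F (trv R f) = of ℤ F f := by
        rw [← map_mul, rpart_mul_trv]
      rw [this]
      abel
end DxSec

noncomputable section BetaSec
variable {F : Type} [Group F] (S : Subgroup F) [S.Normal]

/-- transversal for left cosets `f S`. -/
def utrv (f : F) : F := (QuotientGroup.mk f : F ⧸ S).out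

lemma utrv_spec (f : F) : (utrv S f)⁻¹ * f ∈ S := by
  have h : (QuotientGroup.mk (utrv S f) : F ⧸ S) = QuotientGroup.mk f :=
    Quotient.out_eq _
  exact QuotientGroup.eq.mp h

/-- the `S`-part of `f` : `f = utrv f * spart f`. -/
def spart (f : F) : S := ⟨(utrv S f)⁻¹ * f, utrv_spec S f⟩

lemma utrv_mul_right (f : F) {s : F} (hs : s ∈ S) : utrv S (f * s) = utrv S f := by
  unfold utrv
  congr 1
  rw [QuotientGroup.eq]
  simpa [mul_assoc] using hs

lemma spart_mul_right (f : F) {s : F} (hs : s ∈ S) :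
    spart S (f * s) = spart S f * ⟨s, hs⟩ := by
  ext
  simp [spart, utrv_mul_right S f hs, mul_assoc]

/-- the linear map `ℤ[F] → S_ab` that induces `𝔰/𝔣𝔰 ≅ S_ab`. -/
def betaMap : MonoidAlgebra ℤ F →ₗ[ℤ] Additive (Abelianization S) :=
  Finsupp.linearCombination ℤ
    (fun f => Additive.ofMul (Abelianization.of (spart S f))) ∘ₗ
    (MonoidAlgebra.coeffLinearEquiv ℤ).toLinearMap

lemma betaMap_of (f : F) :
    betaMap S (of ℤ F f) = Additive.ofMul (Abelianization.of (spart S f)) := by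
  show (Finsupp.linearCombination ℤ
      (fun f => Additive.ofMul (Abelianization.of (spart S f)))) (Finsupp.single f 1) = _
  rw [Finsupp.linearCombination_single, one_smul]

lemma betaMap_of_mul_rel (f : F) {s : F} (hs : s ∈ S) :
    betaMap S (of ℤ F f * (of ℤ F s - 1)) =
      Additive.ofMul (Abelianization.of ⟨s, hs⟩) := by
  rw [mul_sub, mul_one, ← map_mul, map_sub, betaMap_of, betaMap_of,
    spart_mul_right S f hs]
  rw [map_mul]
  show Additive.ofMul (Abelianization.of (spart S f) *
      Abelianization.of (⟨s, hs⟩ : S)) - _ = _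
  rw [ofMul_mul]
  abel

lemma betaMap_mul_rel (v : MonoidAlgebra ℤ F) {s : F} (hs : s ∈ S) :
    betaMap S (v * (of ℤ F s - 1)) =
      aug v • Additive.ofMul (Abelianization.of ⟨s, hs⟩) := by
  induction v using MonoidAlgebra.induction_linear with
  | zero => simp
  | add a b ha hb => rw [add_mul, map_add, ha, hb, map_add, add_smul]
  | single f b =>
      have hb : (MonoidAlgebra.single f b : MonoidAlgebra ℤ F) = b • of ℤ F f := by
        show _ = b • MonoidAlgebra.single f (1 : ℤ); rw [MonoidAlgebra.smul_single', mul_one]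
      rw [hb, smul_mul_assoc, map_smul, betaMap_of_mul_rel S f hs, map_smul,
        aug_of, smul_assoc]
      norm_num
end BetaSec

noncomputable section IdealLemmas
variable {F : Type} [Group F]

-- we restate relIdeal's generating set membership helpers after relIdeal is defined later;
-- here we work with the span description directly via an abbreviation.
def relSet (G : Subgroup F) : Set (MonoidAlgebra ℤ F) :=
  {x | ∃ f₁ f₂ : F, ∃ g ∈ G, x = of ℤ F f₁ * (of ℤ F g - 1) * of ℤ F f₂}

@[simp] lemma aug_single (f : F) (c : ℤ) :
    aug (MonoidAlgebra.single f c : MonoidAlgebra ℤ F) = c := by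
  have h : (MonoidAlgebra.single f c : MonoidAlgebra ℤ F) = c • of ℤ F f := by
    show _ = c • MonoidAlgebra.single f (1 : ℤ); rw [MonoidAlgebra.smul_single', mul_one]
  rw [h, map_smul, aug_of, smul_eq_mul, mul_one]

lemma rel_mem_set {G : Subgroup F} {r : F} (hr : r ∈ G) :
    of ℤ F r - 1 ∈ relSet G :=
  ⟨1, 1, r, hr, by rw [map_one, one_mul, mul_one]⟩

lemma conj_left_identity (f r : F) :
    of ℤ F f * (of ℤ F r - 1) = (of ℤ F (f * r * f⁻¹) - 1) * of ℤ F f := by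
  rw [mul_sub, sub_mul, mul_one, one_mul, ← map_mul, ← map_mul]
  simp [mul_assoc]

lemma conj_right_identity (s f : F) :
    (of ℤ F s - 1) * of ℤ F f = of ℤ F f * (of ℤ F (f⁻¹ * s * f) - 1) := by
  rw [mul_sub, sub_mul, mul_one, one_mul, ← map_mul, ← map_mul]
  simp [mul_assoc]

lemma relSet_elem_eq {G : Subgroup F} [G.Normal] {a : MonoidAlgebra ℤ F}
    (ha : a ∈ relSet G) :
    ∃ (r : F) (_ : r ∈ G) (f : F), a = (of ℤ F r - 1) * of ℤ F f := by
  obtain ⟨f₁, f₂, g, hg, rfl⟩ := ha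
  refine ⟨f₁ * g * f₁⁻¹, Subgroup.Normal.conj_mem ‹G.Normal› _ hg _, f₁ * f₂, ?_⟩
  rw [conj_left_identity, mul_assoc, ← map_mul]

lemma relSet_elem_eq' {G : Subgroup F} [G.Normal] {a : MonoidAlgebra ℤ F}
    (ha : a ∈ relSet G) :
    ∃ (f : F) (s : F) (_ : s ∈ G), a = of ℤ F f * (of ℤ F s - 1) := by
  obtain ⟨f₁, f₂, g, hg, rfl⟩ := ha
  refine ⟨f₁ * f₂, f₂⁻¹ * g * f₂, Subgroup.Normal.conj_mem' ‹G.Normal› _ hg _, ?_⟩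
  rw [mul_assoc, conj_right_identity, ← mul_assoc, ← map_mul]

lemma aug_relSpan {G : Subgroup F} {a : MonoidAlgebra ℤ F}
    (ha : a ∈ Submodule.span ℤ (relSet G)) : aug a = 0 := by
  induction ha using Submodule.span_induction with
  | mem x hx =>
      obtain ⟨f₁, f₂, g, hg, rfl⟩ := hx
      simp [map_mul, map_sub]
  | zero => simp
  | add x y _ _ hx hy => rw [map_add, hx, hy, add_zero]
  | smul c x _ hx => rw [map_smul, hx, smul_zero]

/-- β kills `v * c` for any `c ∈ 𝔰` whenever `aug v = 0`. -/
lemma betaMap_vanish {S : Subgroup F} [S.Normal] {v : MonoidAlgebra ℤ F}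
    (hv : aug v = 0) {b : MonoidAlgebra ℤ F}
    (hb : b ∈ Submodule.span ℤ (relSet S)) :
    betaMap S (v * b) = 0 := by
  induction hb using Submodule.span_induction with
  | mem x hx =>
      obtain ⟨f, s, hs, rfl⟩ := relSet_elem_eq' hx
      rw [← mul_assoc, betaMap_mul_rel _ _ hs, map_mul, hv, zero_mul, zero_smul]
  | zero => simp
  | add x y _ _ hx hy => rw [mul_add, map_add, hx, hy, add_zero]
  | smul c x _ hx => rw [mul_smul_comm, map_smul, hx, smul_zero]
end IdealLemmas


noncomputable section PhiSec
variable {F : Type} [Group F] (R S : Subgroup F) [R.Normal] [S.Normal]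

lemma relIdeal_eq (G : Subgroup F) : relIdeal F G = Submodule.span ℤ (relSet G) := rfl

lemma rel_mem_relIdeal {G : Subgroup F} {r : F} (hr : r ∈ G) :
    of ℤ F r - 1 ∈ relIdeal F G :=
  Submodule.subset_span (rel_mem_set hr)

lemma cube_mem_J {r s₁ s₂ : F} (hr : r ∈ R) (hs₂ : s₂ ∈ S) :
    (of ℤ F r - 1) * (of ℤ F s₁ - 1) * (of ℤ F s₂ - 1) ∈
      relIdeal F R * relIdeal F ⊤ * relIdeal F S :=
  Submodule.mul_mem_mul
    (Submodule.mul_mem_mul (rel_mem_relIdeal hr)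
      (rel_mem_relIdeal (Subgroup.mem_top s₁))) (rel_mem_relIdeal hs₂)

/-- the inner monoid hom `s ↦ (r-1)(s-1) mod J`. -/
def phiAux (r : R) :
    S →* Multiplicative
      (MonoidAlgebra ℤ F ⧸ (relIdeal F R * relIdeal F ⊤ * relIdeal F S)) where
  toFun s := Multiplicative.ofAdd
    (Submodule.Quotient.mk ((of ℤ F (r : F) - 1) * (of ℤ F (s : F) - 1)))
  map_one' := by
    show Multiplicative.ofAdd
      (Submodule.Quotient.mk ((of ℤ F (r : F) - 1) * (of ℤ F ((1 : S) : F) - 1))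
        : MonoidAlgebra ℤ F ⧸ (relIdeal F R * relIdeal F ⊤ * relIdeal F S)) = 1
    have h : (of ℤ F (r : F) - 1) * (of ℤ F ((1 : S) : F) - 1) = 0 := by
      simp only [OneMemClass.coe_one, map_one, sub_self, mul_zero]
    rw [h]
    rfl
  map_mul' s₁ s₂ := by
    show Multiplicative.ofAdd
        (Submodule.Quotient.mk
          ((of ℤ F (r : F) - 1) * (of ℤ F ((s₁ * s₂ : S) : F) - 1))
          : MonoidAlgebra ℤ F ⧸ (relIdeal F R * relIdeal F ⊤ * relIdeal F S)) =
      Multiplicative.ofAdd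
        (Submodule.Quotient.mk ((of ℤ F (r : F) - 1) * (of ℤ F ((s₁ : S) : F) - 1))) *
      Multiplicative.ofAdd
        (Submodule.Quotient.mk ((of ℤ F (r : F) - 1) * (of ℤ F ((s₂ : S) : F) - 1)))
    rw [← ofAdd_add, ← Submodule.Quotient.mk_add]
    apply congrArg Multiplicative.ofAdd
    rw [Submodule.Quotient.eq]
    have key : (of ℤ F (r : F) - 1) * (of ℤ F ((s₁ * s₂ : S) : F) - 1) -
        ((of ℤ F (r : F) - 1) * (of ℤ F (s₁ : F) - 1) +
         (of ℤ F (r : F) - 1) * (of ℤ F (s₂ : F) - 1)) =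
        (of ℤ F (r : F) - 1) * (of ℤ F (s₁ : F) - 1) * (of ℤ F (s₂ : F) - 1) := by
      push_cast [map_mul]
      noncomm_ring
    rw [key]
    exact cube_mem_J R S r.2 s₂.2

/-- the outer monoid hom. -/
def phiAux2 :
    R →* (S →* Multiplicative
      (MonoidAlgebra ℤ F ⧸ (relIdeal F R * relIdeal F ⊤ * relIdeal F S))) where
  toFun := phiAux R S
  map_one' := by
    ext s
    show Multiplicative.ofAdd
      (Submodule.Quotient.mk ((of ℤ F ((1 : R) : F) - 1) * (of ℤ F (s : F) - 1))
        : MonoidAlgebra ℤ F ⧸ (relIdeal F R * relIdeal F ⊤ * relIdeal F S)) = 1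
    have h : (of ℤ F ((1 : R) : F) - 1) * (of ℤ F (s : F) - 1) = 0 := by
      simp only [OneMemClass.coe_one, map_one, sub_self, zero_mul]
    rw [h]
    rfl
  map_mul' r₁ r₂ := by
    ext s
    show Multiplicative.ofAdd
        (Submodule.Quotient.mk
          ((of ℤ F ((r₁ * r₂ : R) : F) - 1) * (of ℤ F (s : F) - 1))
          : MonoidAlgebra ℤ F ⧸ (relIdeal F R * relIdeal F ⊤ * relIdeal F S)) =
      Multiplicative.ofAdd
        (Submodule.Quotient.mk ((of ℤ F ((r₁ : R) : F) - 1) * (of ℤ F (s : F) - 1))) *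
      Multiplicative.ofAdd
        (Submodule.Quotient.mk ((of ℤ F ((r₂ : R) : F) - 1) * (of ℤ F (s : F) - 1)))
    rw [← ofAdd_add, ← Submodule.Quotient.mk_add]
    apply congrArg Multiplicative.ofAdd
    rw [Submodule.Quotient.eq]
    have key : (of ℤ F ((r₁ * r₂ : R) : F) - 1) * (of ℤ F (s : F) - 1) -
        ((of ℤ F (r₁ : F) - 1) * (of ℤ F (s : F) - 1) +
         (of ℤ F (r₂ : F) - 1) * (of ℤ F (s : F) - 1)) =
        (of ℤ F (r₁ : F) - 1) * (of ℤ F (r₂ : F) - 1) * (of ℤ F (s : F) - 1) := by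
      push_cast [map_mul]
      noncomm_ring
    rw [key]
    exact Submodule.mul_mem_mul
      (Submodule.mul_mem_mul (rel_mem_relIdeal r₁.2)
        (rel_mem_relIdeal (Subgroup.mem_top _))) (rel_mem_relIdeal s.2)

lemma Abelianization.lift_mul_apply {G : Type*} [Group G] {M : Type*} [CommGroup M]
    (g₁ g₂ : G →* M) (b : Abelianization G) :
    Abelianization.lift (g₁ * g₂) b = Abelianization.lift g₁ b * Abelianization.lift g₂ b := by
  have h : Abelianization.lift (g₁ * g₂) = Abelianization.lift g₁ * Abelianization.lift g₂ :=
    Abelianization.hom_ext _ _ (by ext x; simp)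
  rw [h]; rfl

lemma Abelianization.lift_one_apply {G : Type*} [Group G] {M : Type*} [CommGroup M]
    (b : Abelianization G) : Abelianization.lift (1 : G →* M) b = 1 := by
  have h : Abelianization.lift (1 : G →* M) = 1 :=
    Abelianization.hom_ext _ _ (by ext x; simp)
  rw [h]; rfl

/-- intermediate hom: `R →* (Ab S →* Mult Q)`. -/
def phiG1 : R →* (Abelianization S →* Multiplicative
    (MonoidAlgebra ℤ F ⧸ (relIdeal F R * relIdeal F ⊤ * relIdeal F S))) where
  toFun r := Abelianization.lift (phiAux2 R S r)
  map_one' := by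
    show Abelianization.lift (phiAux2 R S 1) = 1
    rw [map_one]
    exact Abelianization.hom_ext _ _ (by ext x; simp [Abelianization.lift_apply_of])
  map_mul' r₁ r₂ := by
    show Abelianization.lift (phiAux2 R S (r₁ * r₂)) =
      Abelianization.lift (phiAux2 R S r₁) * Abelianization.lift (phiAux2 R S r₂)
    rw [map_mul]
    refine Abelianization.hom_ext _ _ ?_
    ext x
    simp only [MonoidHom.comp_apply, MonoidHom.mul_apply, Abelianization.lift_apply_of]

/-- the full lift: `Ab R →* (Ab S →* Mult Q)`. -/
def phiG2 : Abelianization R →* (Abelianization S →* Multiplicative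
    (MonoidAlgebra ℤ F ⧸ (relIdeal F R * relIdeal F ⊤ * relIdeal F S))) :=
  Abelianization.lift (phiG1 R S)

/-- bundled additive version in the first variable. -/
def bOuter (n : Additive (Abelianization S)) :
    Additive (Abelianization R) →+
      (MonoidAlgebra ℤ F ⧸ (relIdeal F R * relIdeal F ⊤ * relIdeal F S)) where
  toFun m := MonoidHom.toAdditiveLeft (phiG2 R S m.toMul) n
  map_zero' := by
    show MonoidHom.toAdditiveLeft (phiG2 R S 1) n = 0
    rw [map_one]
    rfl
  map_add' m₁ m₂ := by
    show MonoidHom.toAdditiveLeft (phiG2 R S (m₁.toMul * m₂.toMul)) n = _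
    rw [map_mul]
    rfl

/-- the linear map from the tensor product. -/
def Phi0 : (Additive (Abelianization R)) ⊗[ℤ] (Additive (Abelianization S)) →ₗ[ℤ]
    (MonoidAlgebra ℤ F ⧸ (relIdeal F R * relIdeal F ⊤ * relIdeal F S)) :=
  TensorProduct.lift (LinearMap.mk₂ ℤ
    (fun m n => bOuter R S n m)
    (fun m₁ m₂ n => map_add (bOuter R S n) m₁ m₂)
    (fun c m n => map_zsmul (bOuter R S n) c m)
    (fun m n₁ n₂ => map_add (MonoidHom.toAdditiveLeft (phiG2 R S m.toMul)) n₁ n₂)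
    (fun c m n => map_zsmul (MonoidHom.toAdditiveLeft (phiG2 R S m.toMul)) c n))

lemma Phi0_tmul {r s : F} (hr : r ∈ R) (hs : s ∈ S) :
    Phi0 R S (Additive.ofMul (Abelianization.of ⟨r, hr⟩) ⊗ₜ[ℤ]
        Additive.ofMul (Abelianization.of ⟨s, hs⟩)) =
      Submodule.Quotient.mk ((of ℤ F r - 1) * (of ℤ F s - 1)) := by
  show MonoidHom.toAdditiveLeft
      (phiG2 R S (Abelianization.of ⟨r, hr⟩)) (Additive.ofMul (Abelianization.of ⟨s, hs⟩)) = _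
  rw [phiG2, Abelianization.lift_apply_of]
  show Multiplicative.toAdd
    ((Abelianization.lift (phiAux2 R S ⟨r, hr⟩)) (Abelianization.of ⟨s, hs⟩)) = _
  rw [Abelianization.lift_apply_of]
  rfl
end PhiSec

noncomputable section RangeInj
variable {F : Type} [Group F] (R S : Subgroup F) [R.Normal] [S.Normal]

lemma ab_of_surj {G : Type*} [Group G] :
    Function.Surjective (Abelianization.of : G → Abelianization G) :=
  fun b => QuotientGroup.mk_surjective b

lemma Phi0_range :
    LinearMap.range (Phi0 R S) =
      (relIdeal F R * relIdeal F S).map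
        (relIdeal F R * relIdeal F ⊤ * relIdeal F S).mkQ := by
  apply le_antisymm
  · rintro y ⟨w, rfl⟩
    induction w using TensorProduct.induction_on with
    | zero => rw [map_zero]; exact Submodule.zero_mem _
    | tmul m n =>
        obtain ⟨a, rfl⟩ := Additive.ofMul.surjective m
        obtain ⟨b, rfl⟩ := Additive.ofMul.surjective n
        obtain ⟨rr, rfl⟩ := ab_of_surj a
        obtain ⟨ss, rfl⟩ := ab_of_surj b
        have h1 : Phi0 R S (Additive.ofMul (Abelianization.of rr) ⊗ₜ[ℤ]
            Additive.ofMul (Abelianization.of ss)) =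
            Submodule.Quotient.mk ((of ℤ F (rr : F) - 1) * (of ℤ F (ss : F) - 1)) :=
          Phi0_tmul R S rr.2 ss.2
        rw [h1]
        exact Submodule.mem_map_of_mem
          (Submodule.mul_mem_mul (rel_mem_relIdeal rr.2) (rel_mem_relIdeal ss.2))
    | add u v hu hv => rw [map_add]; exact Submodule.add_mem _ hu hv
  · rintro y ⟨z, hz, rfl⟩
    show (relIdeal F R * relIdeal F ⊤ * relIdeal F S).mkQ z ∈ _
    refine Submodule.mul_induction_on
      (C := fun z => (relIdeal F R * relIdeal F ⊤ * relIdeal F S).mkQ z ∈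
        LinearMap.range (Phi0 R S)) hz (fun a ha b hb => ?_)
      (fun u v hu hv => by rw [map_add]; exact Submodule.add_mem _ hu hv)
    · induction ha using Submodule.span_induction with
        | mem a' ha' =>
            induction hb using Submodule.span_induction with
            | mem b' hb' =>
                obtain ⟨r, hr, f, rfl⟩ := relSet_elem_eq ha'
                obtain ⟨h, s, hs, rfl⟩ := relSet_elem_eq' hb'
                have hid : (of ℤ F r - 1) * of ℤ F f * (of ℤ F h * (of ℤ F s - 1)) =
                    (of ℤ F r - 1) * (of ℤ F s - 1) +
                    (of ℤ F r - 1) * (of ℤ F (f * h) - 1) * (of ℤ F s - 1) := by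
                  rw [map_mul]
                  noncomm_ring
                rw [hid, map_add]
                have h2 : (relIdeal F R * relIdeal F ⊤ * relIdeal F S).mkQ
                    ((of ℤ F r - 1) * (of ℤ F (f * h) - 1) * (of ℤ F s - 1)) = 0 := by
                  rw [Submodule.mkQ_apply, Submodule.Quotient.mk_eq_zero]
                  exact Submodule.mul_mem_mul
                    (Submodule.mul_mem_mul (rel_mem_relIdeal hr)
                      (rel_mem_relIdeal (Subgroup.mem_top _))) (rel_mem_relIdeal hs)
                rw [h2, add_zero, Submodule.mkQ_apply, ← Phi0_tmul R S hr hs]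
                exact LinearMap.mem_range_self _ _
            | zero => rw [mul_zero, map_zero]; exact Submodule.zero_mem _
            | add u v _ _ hu hv =>
                rw [mul_add, map_add]; exact Submodule.add_mem _ hu hv
            | smul c u _ hu =>
                rw [mul_smul_comm, map_smul]; exact Submodule.smul_mem _ _ hu
        | zero => rw [zero_mul, map_zero]; exact Submodule.zero_mem _
        | add u v _ _ hu hv =>
            rw [add_mul, map_add]; exact Submodule.add_mem _ hu hv
        | smul c u _ hu =>
            rw [smul_mul_assoc, map_smul]; exact Submodule.smul_mem _ _ hu

/-- β kills `u * c` for `c ∈ 𝔣𝔰`. -/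
lemma betaMap_fs {c : MonoidAlgebra ℤ F}
    (hc : c ∈ relIdeal F (⊤ : Subgroup F) * relIdeal F S)
    (u : MonoidAlgebra ℤ F) : betaMap S (u * c) = 0 := by
  refine Submodule.mul_induction_on
    (C := fun c => ∀ u : MonoidAlgebra ℤ F, betaMap S (u * c) = 0) hc
    (fun a ha b hb u => ?_) (fun c₁ c₂ h₁ h₂ u => ?_) u
  · rw [← mul_assoc]
    exact betaMap_vanish (by rw [map_mul, aug_relSpan ha, mul_zero]) hb
  · rw [mul_add, map_add, h₁ u, h₂ u, add_zero]

variable [IsFreeGroup R]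

/-- β∘Dx kills J. -/
lemma psi_vanish (x : IsFreeGroup.Generators R) {z : MonoidAlgebra ℤ F}
    (hz : z ∈ relIdeal F R * relIdeal F ⊤ * relIdeal F S) :
    betaMap S (Dx R x z) = 0 := by
  rw [mul_assoc] at hz
  refine Submodule.mul_induction_on
    (C := fun z => betaMap S (Dx R x z) = 0) hz (fun a ha c hc => ?_)
    (fun u v hu hv => by rw [map_add, map_add, hu, hv, add_zero])
  induction ha using Submodule.span_induction with
  | mem a' ha' =>
      obtain ⟨r, hr, f, rfl⟩ := relSet_elem_eq ha'
      rw [mul_assoc, Dx_r_mul R x hr, ← mul_assoc]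
      exact betaMap_fs S hc _
  | zero => rw [zero_mul, map_zero, map_zero]
  | add u v _ _ hu hv =>
      rw [add_mul, map_add, map_add, hu, hv, add_zero]
  | smul cc u _ hu =>
      rw [smul_mul_assoc, map_smul, map_smul, hu, smul_zero]

/-- the descended map on the quotient. -/
def LambdaX (x : IsFreeGroup.Generators R) :
    (MonoidAlgebra ℤ F ⧸ (relIdeal F R * relIdeal F ⊤ * relIdeal F S)) →ₗ[ℤ]
      Additive (Abelianization S) :=
  Submodule.liftQ _ ((betaMap S).comp (Dx R x))
    (fun z hz => by
      rw [LinearMap.mem_ker, LinearMap.comp_apply]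
      exact psi_vanish R S x hz)

lemma LambdaX_Phi0_tmul (x : IsFreeGroup.Generators R) {r s : F}
    (hr : r ∈ R) (hs : s ∈ S) :
    LambdaX R S x (Phi0 R S (Additive.ofMul (Abelianization.of ⟨r, hr⟩) ⊗ₜ[ℤ]
        Additive.ofMul (Abelianization.of ⟨s, hs⟩))) =
      aug (dfox R x ⟨r, hr⟩) • Additive.ofMul (Abelianization.of ⟨s, hs⟩) := by
  rw [Phi0_tmul R S hr hs]
  show betaMap S (Dx R x ((of ℤ F r - 1) * (of ℤ F s - 1))) = _
  rw [Dx_r_mul R x hr, betaMap_mul_rel S _ hs]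

/-- coordinate functional on `R_ab` given by exponent-sum of generator `x`. -/
def chomAux (x : IsFreeGroup.Generators R) : R →* Multiplicative ℤ where
  toFun r := Multiplicative.ofAdd (aug (dfox R x r))
  map_one' := by
    show Multiplicative.ofAdd (aug (dfox R x 1)) = 1
    rw [dfox_one]
    simp
  map_mul' r₁ r₂ := by
    show Multiplicative.ofAdd (aug (dfox R x (r₁ * r₂))) =
      Multiplicative.ofAdd (aug (dfox R x r₁)) * Multiplicative.ofAdd (aug (dfox R x r₂))
    rw [dfox_mul, ← ofAdd_add]
    apply congrArg Multiplicative.ofAdd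
    rw [map_add, map_mul, aug_of, mul_one]

def cHom (x : IsFreeGroup.Generators R) : Additive (Abelianization R) →+ ℤ :=
  MonoidHom.toAdditiveLeft (Abelianization.lift (chomAux R x))

lemma cHom_of (x : IsFreeGroup.Generators R) (r : R) :
    cHom R x (Additive.ofMul (Abelianization.of r)) = aug (dfox R x r) := by
  show Multiplicative.toAdd ((Abelianization.lift (chomAux R x)) (Abelianization.of r)) = _
  rw [Abelianization.lift_apply_of]
  rfl

/-- the multiplicative hom to the free abelian group on the generators. -/
def freph : R →* Multiplicative (IsFreeGroup.Generators R →₀ ℤ) :=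
  IsFreeGroup.lift (fun y => Multiplicative.ofAdd (Finsupp.single y 1))

def F1 : Additive (Abelianization R) →+ (IsFreeGroup.Generators R →₀ ℤ) :=
  MonoidHom.toAdditiveLeft (Abelianization.lift (freph R))

def F2 : (IsFreeGroup.Generators R →₀ ℤ) →ₗ[ℤ] Additive (Abelianization R) :=
  Finsupp.linearCombination ℤ
    (fun y => Additive.ofMul (Abelianization.of (IsFreeGroup.of y)))

lemma F1_gen (y : IsFreeGroup.Generators R) :
    F1 R (Additive.ofMul (Abelianization.of (IsFreeGroup.of y))) = Finsupp.single y 1 := by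
  show Multiplicative.toAdd
    ((Abelianization.lift (freph R)) (Abelianization.of (IsFreeGroup.of y))) = _
  rw [Abelianization.lift_apply_of, freph, IsFreeGroup.lift_of]
  rfl

lemma F2_single (y : IsFreeGroup.Generators R) :
    F2 R (Finsupp.single y 1) = Additive.ofMul (Abelianization.of (IsFreeGroup.of y)) := by
  show (Finsupp.linearCombination ℤ
    (fun y => Additive.ofMul (Abelianization.of (IsFreeGroup.of y)))) (Finsupp.single y 1) = _
  rw [Finsupp.linearCombination_single, one_smul]

lemma F2_F1 : ∀ m, F2 R (F1 R m) = m := by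
  have key : ∀ r : R, F2 R (F1 R (Additive.ofMul (Abelianization.of r))) =
      Additive.ofMul (Abelianization.of r) := by
    let g1 : R →* Multiplicative (Additive (Abelianization R)) :=
      { toFun := fun r =>
          Multiplicative.ofAdd (F2 R (F1 R (Additive.ofMul (Abelianization.of r))))
        map_one' := by
          show Multiplicative.ofAdd
            (F2 R (F1 R (Additive.ofMul (Abelianization.of (1 : R))))) = 1
          rw [map_one]
          show Multiplicative.ofAdd (F2 R (F1 R 0)) = 1
          rw [map_zero, map_zero]
          rfl
        map_mul' := fun r₁ r₂ => by
          show Multiplicative.ofAdd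
            (F2 R (F1 R (Additive.ofMul (Abelianization.of (r₁ * r₂))))) = _
          rw [map_mul]
          show Multiplicative.ofAdd (F2 R (F1 R
            (Additive.ofMul (Abelianization.of r₁) + Additive.ofMul (Abelianization.of r₂)))) = _
          rw [map_add, map_add, ofAdd_add] }
    let g2 : R →* Multiplicative (Additive (Abelianization R)) :=
      { toFun := fun r => Multiplicative.ofAdd (Additive.ofMul (Abelianization.of r))
        map_one' := by
          show Multiplicative.ofAdd (Additive.ofMul (Abelianization.of (1 : R))) = 1
          rw [map_one]
          rfl
        map_mul' := fun r₁ r₂ => by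
          show Multiplicative.ofAdd (Additive.ofMul (Abelianization.of (r₁ * r₂))) = _
          rw [map_mul]
          rfl }
    have h : g1 = g2 := by
      apply IsFreeGroup.ext_hom
      intro y
      show Multiplicative.ofAdd
          (F2 R (F1 R (Additive.ofMul (Abelianization.of (IsFreeGroup.of y))))) = _
      rw [F1_gen, F2_single]
      rfl
    intro r
    exact congrArg Multiplicative.toAdd (DFunLike.congr_fun h r)
  intro m
  obtain ⟨a, rfl⟩ := Additive.ofMul.surjective m
  obtain ⟨r, rfl⟩ := ab_of_surj a
  exact key r

lemma cHom_eq (x : IsFreeGroup.Generators R) (m : Additive (Abelianization R)) :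
    F1 R m x = cHom R x m := by
  have key : ∀ r : R, F1 R (Additive.ofMul (Abelianization.of r)) x =
      cHom R x (Additive.ofMul (Abelianization.of r)) := by
    let g1 : R →* Multiplicative ℤ :=
      { toFun := fun r =>
          Multiplicative.ofAdd (F1 R (Additive.ofMul (Abelianization.of r)) x)
        map_one' := by
          show Multiplicative.ofAdd (F1 R (Additive.ofMul (Abelianization.of (1 : R))) x) = 1
          rw [map_one]
          show Multiplicative.ofAdd ((F1 R 0) x) = 1
          rw [map_zero]
          rfl
        map_mul' := fun r₁ r₂ => by
          show Multiplicative.ofAdd (F1 R (Additive.ofMul (Abelianization.of (r₁ * r₂))) x) = _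
          rw [map_mul]
          show Multiplicative.ofAdd (F1 R
            (Additive.ofMul (Abelianization.of r₁) + Additive.ofMul (Abelianization.of r₂)) x) = _
          rw [map_add, Finsupp.add_apply, ofAdd_add] }
    have h : g1 = chomAux R x := by
      apply IsFreeGroup.ext_hom
      intro y
      show Multiplicative.ofAdd
          (F1 R (Additive.ofMul (Abelianization.of (IsFreeGroup.of y))) x) =
        Multiplicative.ofAdd (aug (dfox R x (IsFreeGroup.of y)))
      classical
      rw [F1_gen, dfox_of]
      apply congrArg Multiplicative.ofAdd
      rw [Finsupp.single_apply, apply_ite aug, map_one, map_zero]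
    intro r
    have h2 := congrArg Multiplicative.toAdd (DFunLike.congr_fun h r)
    rw [cHom_of]
    exact h2
  obtain ⟨a, rfl⟩ := Additive.ofMul.surjective m
  obtain ⟨r, rfl⟩ := ab_of_surj a
  exact key r

/-- the representation equivalence for `R_ab`. -/
def eR : Additive (Abelianization R) ≃ₗ[ℤ] (IsFreeGroup.Generators R →₀ ℤ) :=
  LinearEquiv.ofLinear (F1 R).toIntLinearMap (F2 R)
    (by
      apply Finsupp.lhom_ext
      intro y b
      have hb : (Finsupp.single y b : IsFreeGroup.Generators R →₀ ℤ) =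
          b • Finsupp.single y 1 := by
        rw [Finsupp.smul_single, smul_eq_mul, mul_one]
      rw [hb, map_smul, map_smul]
      rw [LinearMap.comp_apply, F2_single]
      show b • F1 R (Additive.ofMul (Abelianization.of (IsFreeGroup.of y))) = _
      rw [F1_gen]
      rfl)
    (by
      apply LinearMap.ext
      intro m
      exact F2_F1 R m)

open scoped Classical

/-- the coordinate decomposition of the tensor product. -/
def E2 : (Additive (Abelianization R)) ⊗[ℤ] (Additive (Abelianization S)) ≃ₗ[ℤ]
    (IsFreeGroup.Generators R →₀ Additive (Abelianization S)) :=
  (TensorProduct.congr (eR R) (LinearEquiv.refl ℤ _)).trans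
    (TensorProduct.finsuppScalarLeft ℤ (Additive (Abelianization S)) _)

lemma E2_coord (x : IsFreeGroup.Generators R)
    (w : (Additive (Abelianization R)) ⊗[ℤ] (Additive (Abelianization S))) :
    LambdaX R S x (Phi0 R S w) = (E2 R S w) x := by
  induction w using TensorProduct.induction_on with
  | zero => rw [map_zero, map_zero, map_zero]; rfl
  | add u v hu hv =>
      rw [map_add, map_add, map_add, hu, hv]
      rfl
  | tmul m n =>
      obtain ⟨a, rfl⟩ := Additive.ofMul.surjective m
      obtain ⟨b, rfl⟩ := Additive.ofMul.surjective n
      obtain ⟨rr, rfl⟩ := ab_of_surj a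
      obtain ⟨ss, rfl⟩ := ab_of_surj b
      have h1 := LambdaX_Phi0_tmul R S x rr.2 ss.2
      rw [h1]
      show _ = (TensorProduct.finsuppScalarLeft ℤ (Additive (Abelianization S)) _
        ((TensorProduct.congr (eR R) (LinearEquiv.refl ℤ _))
          (Additive.ofMul (Abelianization.of rr) ⊗ₜ[ℤ] Additive.ofMul (Abelianization.of ss)))) x
      rw [TensorProduct.congr_tmul,
        TensorProduct.finsuppScalarLeft_apply_tmul_apply]
      show _ = ((eR R) (Additive.ofMul (Abelianization.of rr)) x) •
        (Additive.ofMul (Abelianization.of ss))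
      have h2 : (eR R) (Additive.ofMul (Abelianization.of rr)) =
          F1 R (Additive.ofMul (Abelianization.of rr)) := rfl
      rw [h2, cHom_eq, cHom_of]

lemma Phi0_inj : Function.Injective (Phi0 R S) := by
  rw [← LinearMap.ker_eq_bot]
  rw [Submodule.eq_bot_iff]
  intro w hw
  rw [LinearMap.mem_ker] at hw
  have hE : E2 R S w = 0 := by
    apply Finsupp.ext
    intro x
    rw [← E2_coord R S x w, hw, map_zero]
    rfl
  exact (E2 R S).injective
    (show E2 R S w = E2 R S 0 by rw [hE, map_zero])

end RangeInj

theorem stmt3 (F : Type) [Group F] [IsFreeGroup F] (R S : Subgroup F)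
    [R.Normal] [S.Normal] :
    ∃ e : (Additive (Abelianization R)) ⊗[ℤ] (Additive (Abelianization S)) ≃+
        ((relIdeal F R * relIdeal F S).map
          (relIdeal F R * relIdeal F ⊤ * relIdeal F S).mkQ),
      ∀ (r : F) (hr : r ∈ R) (s : F) (hs : s ∈ S),
        ((e (Additive.ofMul (Abelianization.of ⟨r, hr⟩) ⊗ₜ[ℤ]
              Additive.ofMul (Abelianization.of ⟨s, hs⟩)) :
            MonoidAlgebra ℤ F ⧸ (relIdeal F R * relIdeal F ⊤ * relIdeal F S))) =
          Submodule.Quotient.mk ((of ℤ F r - 1) * (of ℤ F s - 1)) := by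
  refine ⟨((LinearEquiv.ofInjective (Phi0 R S) (Phi0_inj R S)).trans
    (LinearEquiv.ofEq _ _ (Phi0_range R S))).toAddEquiv, ?_⟩
  intro r hr s hs
  show ((((LinearEquiv.ofInjective (Phi0 R S) (Phi0_inj R S)).trans
      (LinearEquiv.ofEq _ _ (Phi0_range R S)))
        (Additive.ofMul (Abelianization.of ⟨r, hr⟩) ⊗ₜ[ℤ]
          Additive.ofMul (Abelianization.of ⟨s, hs⟩)) :
      ↥((relIdeal F R * relIdeal F S).map
          (relIdeal F R * relIdeal F ⊤ * relIdeal F S).mkQ)) :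
      MonoidAlgebra ℤ F ⧸ (relIdeal F R * relIdeal F ⊤ * relIdeal F S)) =
    Submodule.Quotient.mk ((of ℤ F r - 1) * (of ℤ F s - 1))
  rw [LinearEquiv.trans_apply, LinearEquiv.coe_ofEq_apply,
    LinearEquiv.ofInjective_apply, Phi0_tmul R S hr hs]
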